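/- Let f : [a, b) → ℝ (b finite) be twice differentiable with f(t) > 0 for all t, f(t) → 0 as t → b⁻, and f''(t) → +∞ as t → b⁻. If C ≥ 0 is a constant with C ≤ 4 f(t) (f''(t) − h) for all t ∈ [a, b) and some constant h ∈ ℝ, then C = 0. -/

import Mathlib

/-- If `f : [a, b) → ℝ` is twice differentiable, positive, `f(t) → 0` and
`f''(t) → +∞` as `t → b⁻`, and `0 ≤ C ≤ 4 f(t) (f''(t) - h)` on `[a, b)` for
some constant `h`, then `C = 0`. -/
theorem const_eq_zero_of_sundman_bound (a b : ℝ) (hab : a < b)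
    (f f' f'' : ℝ → ℝ)
    (hf' : ∀ t ∈ Set.Ico a b, HasDerivWithinAt f (f' t) (Set.Ico a b) t)
    (hf'' : ∀ t ∈ Set.Ico a b, HasDerivWithinAt f' (f'' t) (Set.Ico a b) t)
    (hfpos : ∀ t ∈ Set.Ico a b, 0 < f t)
    (hf0 : Filter.Tendsto f (nhdsWithin b (Set.Iio b)) (nhds 0))
    (hf''top : Filter.Tendsto f'' (nhdsWithin b (Set.Iio b)) Filter.atTop)
    (C h : ℝ) (hC : 0 ≤ C)
    (hineq : ∀ t ∈ Set.Ico a b, C ≤ 4 * f t * (f'' t - h)) :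
    C = 0 := by
  by_contra hC0
  have hCpos : 0 < C := lt_of_le_of_ne hC (Ne.symm hC0)
  -- find t1 ∈ [a, b) such that f'' > 0 on (t1, b)
  have hev : ∀ᶠ t in nhdsWithin b (Set.Iio b), 0 < f'' t :=
    hf''top.eventually_gt_atTop 0
  obtain ⟨s0, hs0, hs0sub⟩ := mem_nhdsLT_iff_exists_Ioo_subset.mp hev
  have hs0b : s0 < b := hs0
  set t1 : ℝ := max a ((s0 + b) / 2) with ht1def
  have ht1a : a ≤ t1 := le_max_left _ _
  have ht1s0 : s0 < t1 := lt_of_lt_of_le (by linarith) (le_max_right _ _)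
  have ht1b : t1 < b := by
    apply max_lt hab; linarith
  have hsubIco : Set.Ico t1 b ⊆ Set.Ico a b := Set.Ico_subset_Ico_left ht1a
  have hIooIco : Set.Ioo t1 b ⊆ Set.Ico a b := fun x hx =>
    ⟨le_trans ht1a hx.1.le, hx.2⟩
  have hf''pos : ∀ x ∈ Set.Ioo t1 b, 0 < f'' x := fun x hx =>
    hs0sub ⟨lt_trans ht1s0 hx.1, hx.2⟩
  -- upgrade derivatives to genuine HasDerivAt on the interior of [a, b)
  have hda : ∀ x ∈ Set.Ioo a b, HasDerivAt f (f' x) x := by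
    intro x hx
    exact (hf' x ⟨hx.1.le, hx.2⟩).hasDerivAt (Ico_mem_nhds hx.1 hx.2)
  have hda' : ∀ x ∈ Set.Ioo a b, HasDerivAt f' (f'' x) x := by
    intro x hx
    exact (hf'' x ⟨hx.1.le, hx.2⟩).hasDerivAt (Ico_mem_nhds hx.1 hx.2)
  have hIooab : Set.Ioo t1 b ⊆ Set.Ioo a b := fun x hx =>
    ⟨lt_of_le_of_lt ht1a hx.1, hx.2⟩
  -- continuity facts
  have hcf : ContinuousOn f (Set.Ico a b) := fun t ht => (hf' t ht).continuousWithinAt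
  have hcf' : ContinuousOn f' (Set.Ico a b) := fun t ht => (hf'' t ht).continuousWithinAt
  -- Step: f' ≤ 0 on (t1, b)
  have hf'nonpos : ∀ s ∈ Set.Ioo t1 b, f' s ≤ 0 := by
    intro s hs
    by_contra hpos
    push_neg at hpos
    -- f' is strictly monotone on [s, b)
    have hsub1 : Set.Ico s b ⊆ Set.Ico a b := fun x hx =>
      ⟨le_trans (hIooab hs).1.le hx.1, hx.2⟩
    have hintIco : interior (Set.Ico s b) = Set.Ioo s b := interior_Ico
    have hmono' : StrictMonoOn f' (Set.Ico s b) := by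
      apply strictMonoOn_of_deriv_pos (convex_Ico s b) (hcf'.mono hsub1)
      intro x hx
      rw [hintIco] at hx
      have hx' : x ∈ Set.Ioo a b := ⟨lt_trans (hIooab hs).1 hx.1, hx.2⟩
      rw [(hda' x hx').deriv]
      exact hf''pos x ⟨lt_trans hs.1 hx.1, hx.2⟩
    -- hence f' > 0 on [s, b), so f is strictly mono on [s, b)
    have hf'pos : ∀ x ∈ Set.Ioo s b, 0 < f' x := by
      intro x hx
      have := hmono' ⟨le_refl s, hs.2⟩ ⟨hx.1.le, hx.2⟩ hx.1
      linarith
    have hmono : StrictMonoOn f (Set.Ico s b) := by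
      apply strictMonoOn_of_deriv_pos (convex_Ico s b) (hcf.mono hsub1)
      intro x hx
      rw [hintIco] at hx
      have hx' : x ∈ Set.Ioo a b := ⟨lt_trans (hIooab hs).1 hx.1, hx.2⟩
      rw [(hda x hx').deriv]
      exact hf'pos x hx
    -- pick s' in (s, b); then f t ≥ f s' eventually, so lim = 0 ≥ f s' > 0
    set s' : ℝ := (s + b) / 2 with hs'def
    have hss' : s < s' := by simp only [hs'def]; linarith [hs.2]
    have hs'b : s' < b := by simp only [hs'def]; linarith [hs.2]
    have hs'mem : s' ∈ Set.Ico a b := ⟨le_trans (hIooab hs).1.le hss'.le, hs'b⟩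
    have hevge : ∀ᶠ t in nhdsWithin b (Set.Iio b), f s' ≤ f t := by
      filter_upwards [Ioo_mem_nhdsLT hs'b] with t ht
      exact (hmono.monotoneOn ⟨hss'.le, hs'b⟩ ⟨le_trans hss'.le ht.1.le, ht.2⟩ ht.1.le)
    have : f s' ≤ 0 := ge_of_tendsto hf0 hevge
    exact absurd (hfpos s' hs'mem) (by linarith)
  -- the Lyapunov-type function φ
  set φ : ℝ → ℝ := fun t => (f' t) ^ 2 / 2 - C / 4 * Real.log (f t) - h * f t with hφdef
  set φ' : ℝ → ℝ := fun t => f' t * f'' t - C / 4 * (f' t / f t) - h * f' t with hφ'def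
  have hφderiv : ∀ x ∈ Set.Ioo t1 b, HasDerivAt φ (φ' x) x := by
    intro x hx
    have hx' : x ∈ Set.Ioo a b := hIooab hx
    have hxmem : x ∈ Set.Ico a b := ⟨hx'.1.le, hx'.2⟩
    have h1 : HasDerivAt (fun t => (f' t) ^ 2 / 2) (f' x * f'' x) x := by
      have := ((hda' x hx').fun_pow 2).div_const 2
      refine this.congr_deriv ?_
      simp; ring
    have h2 : HasDerivAt (fun t => C / 4 * Real.log (f t)) (C / 4 * (f' x / f x)) x :=
      ((hda x hx').log (ne_of_gt (hfpos x hxmem))).const_mul (C / 4)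
    have h3 : HasDerivAt (fun t => h * f t) (h * f' x) x := (hda x hx').const_mul h
    exact (h1.sub h2).sub h3
  have hφ'nonpos : ∀ x ∈ Set.Ioo t1 b, φ' x ≤ 0 := by
    intro x hx
    have hxmem : x ∈ Set.Ico a b := hIooIco hx
    have hfx : 0 < f x := hfpos x hxmem
    have hq : C / (4 * f x) ≤ f'' x - h := by
      rw [div_le_iff₀ (by linarith)]
      nlinarith [hineq x hxmem]
    have hE : φ' x = f' x * (f'' x - C / (4 * f x) - h) := by
      simp only [hφ'def]
      field_simp
    rw [hE]
    have h1 : f' x ≤ 0 := hf'nonpos x hx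
    nlinarith [sub_nonneg.mpr hq]
  -- φ is antitone on [t1, b)
  have hφcont : ContinuousOn φ (Set.Ico t1 b) := by
    apply ContinuousOn.sub
    apply ContinuousOn.sub
    · exact ((hcf'.mono hsubIco).pow 2).div_const 2
    · exact continuousOn_const.mul
        ((hcf.mono hsubIco).log (fun t ht => ne_of_gt (hfpos t (hsubIco ht))))
    · exact continuousOn_const.mul (hcf.mono hsubIco)
  have hφanti : AntitoneOn φ (Set.Ico t1 b) := by
    apply antitoneOn_of_deriv_nonpos (convex_Ico t1 b) hφcont
    · intro x hx
      rw [interior_Ico] at hx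
      exact (hφderiv x hx).differentiableAt.differentiableWithinAt
    · intro x hx
      rw [interior_Ico] at hx
      rw [(hφderiv x hx).deriv]
      exact hφ'nonpos x hx
  -- but φ → +∞ as t → b⁻
  have hfIoi : Filter.Tendsto f (nhdsWithin b (Set.Iio b)) (nhdsWithin 0 (Set.Ioi 0)) := by
    apply tendsto_nhdsWithin_of_tendsto_nhds_of_eventually_within _ hf0
    filter_upwards [Ioo_mem_nhdsLT hab] with t ht
    exact hfpos t ⟨ht.1.le, ht.2⟩
  have hlogbot : Filter.Tendsto (fun t => Real.log (f t)) (nhdsWithin b (Set.Iio b))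
      Filter.atBot := Real.tendsto_log_nhdsGT_zero.comp hfIoi
  have hlogtop : Filter.Tendsto (fun t => -(C / 4 * Real.log (f t)) - h * f t)
      (nhdsWithin b (Set.Iio b)) Filter.atTop := by
    apply Filter.Tendsto.atTop_add _ (by simpa using (hf0.const_mul h).neg)
    have : Filter.Tendsto (fun t => C / 4 * Real.log (f t)) (nhdsWithin b (Set.Iio b))
        Filter.atBot := hlogbot.const_mul_atBot (by linarith)
    exact Filter.tendsto_neg_atBot_atTop.comp this
  have hφtop : Filter.Tendsto φ (nhdsWithin b (Set.Iio b)) Filter.atTop := by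
    apply Filter.tendsto_atTop_mono' _ _ hlogtop
    filter_upwards with t
    simp only [hφdef]
    nlinarith [sq_nonneg (f' t)]
  -- contradiction
  have hbig : ∀ᶠ t in nhdsWithin b (Set.Iio b), φ t1 < φ t :=
    hφtop.eventually_gt_atTop (φ t1)
  have hmem : ∀ᶠ t in nhdsWithin b (Set.Iio b), t ∈ Set.Ico t1 b := by
    filter_upwards [Ioo_mem_nhdsLT ht1b] with t ht
    exact ⟨ht.1.le, ht.2⟩
  obtain ⟨t, h1, h2⟩ := (hbig.and hmem).exists
  have := hφanti ⟨le_refl t1, ht1b⟩ h2 h2.1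
  linarith
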